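/- Let f : [0,1] → ℝ be bounded with range contained in (a,b), let n ≥ 2 and h = (b−a)/n. For k = 0,…,n−2 set A_k = {x : a + k·h < f(x) < a + (k+2)·h}. Then the A_k cover [0,1], and for any disjoint sets B_k ⊆ A_k covering [0,1], the function g defined by g(x) = a + k·h if x ∈ B_k ∩ ℚ and g(x) = a + (k+1/2)·h if x ∈ B_k \ ℚ satisfies ‖f − g‖ ≤ 2h and ω(g,x) ≥ h/2 for every x ∈ [0,1]. -/

import Mathlib

open Set

noncomputable def osc (f : (Set.Icc (0:ℝ) 1) → ℝ) (x : Set.Icc (0:ℝ) 1) : ENNReal :=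
  ⨅ (U : Set (Set.Icc (0:ℝ) 1)) (_ : IsOpen U) (_ : x ∈ U), EMetric.diam (f '' U)

theorem stmt_14 (f : Set.Icc (0:ℝ) 1 → ℝ) (a b : ℝ)
    (hrange : ∀ x, f x ∈ Set.Ioo a b) (n : ℕ) (hn : 2 ≤ n)
    (h : ℝ) (hh : h = (b - a) / n)
    (A : Fin (n - 1) → Set (Set.Icc (0:ℝ) 1))
    (hA : ∀ k, A k = {x | a + k * h < f x ∧ f x < a + (k + 2) * h}) :
    (⋃ k, A k) = univ ∧
    ∀ B : Fin (n - 1) → Set (Set.Icc (0:ℝ) 1),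
      Pairwise (Function.onFun Disjoint B) → (∀ k, B k ⊆ A k) → (⋃ k, B k) = univ →
      ∀ g : Set.Icc (0:ℝ) 1 → ℝ,
        (∀ k, ∀ x ∈ B k,
          ((∃ q : ℚ, (q : ℝ) = (x : ℝ)) → g x = a + k * h) ∧
          (¬ (∃ q : ℚ, (q : ℝ) = (x : ℝ)) → g x = a + (k + 1 / 2) * h)) →
        (∀ x, |f x - g x| ≤ 2 * h) ∧ ∀ x, ENNReal.ofReal (h / 2) ≤ osc g x := by
  have hab : a < b := by
    have := hrange ⟨0, by norm_num⟩
    exact this.1.trans this.2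
  have hnR : (0:ℝ) < n := by exact_mod_cast (by omega : 0 < n)
  have hhpos : 0 < h := by rw [hh]; exact div_pos (sub_pos.2 hab) hnR
  have hb : b = a + n * h := by rw [hh]; field_simp; ring
  have hcastn : ((n - 2 : ℕ) : ℝ) = (n : ℝ) - 2 := by
    rw [Nat.cast_sub hn]; norm_num
  have key : ∀ t : ℝ, a < t → t < b →
      ∃ k : Fin (n-1), a + (k : ℕ) * h < t ∧ t < a + ((k : ℕ) + 2) * h := by
    intro t hat htb
    set c : ℤ := ⌈(t - a) / h⌉ with hc
    have hc1 : 1 ≤ c :=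
      Int.one_le_ceil_iff.2 (div_pos (sub_pos.2 hat) hhpos)
    have hle : (t - a)/h ≤ (c : ℝ) := Int.le_ceil _
    have hlt : (c : ℝ) - 1 < (t - a)/h := by
      have := Int.ceil_lt_add_one ((t - a)/h); rw [← hc] at this; linarith
    by_cases hcase : (c - 1).toNat ≤ n - 2
    · set m : ℕ := (c - 1).toNat with hm
      have hmlt : m < n - 1 := by omega
      have hmc : (m : ℝ) = (c : ℝ) - 1 := by
        have : ((c - 1).toNat : ℤ) = c - 1 := Int.toNat_of_nonneg (by omega)
        rw [hm]; exact_mod_cast this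
      refine ⟨⟨m, hmlt⟩, ?_, ?_⟩
      · show a + (m : ℝ) * h < t
        have := (lt_div_iff₀ hhpos).1 (hmc ▸ hlt : (m:ℝ) < (t - a)/h)
        linarith
      · show t < a + ((m : ℝ) + 2) * h
        have := (div_le_iff₀ hhpos).1 hle
        have hcm : (c : ℝ) = (m : ℝ) + 1 := by rw [hmc]; ring
        nlinarith
    · set m : ℕ := n - 2 with hm
      have hmlt : m < n - 1 := by omega
      have hmc : (m : ℝ) < (c : ℝ) - 1 := by
        have : (m : ℤ) < c - 1 := by omega
        exact_mod_cast this
      refine ⟨⟨m, hmlt⟩, ?_, ?_⟩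
      · show a + (m : ℝ) * h < t
        have h1 : (m : ℝ) < (t - a)/h := lt_trans hmc hlt
        have := (lt_div_iff₀ hhpos).1 h1
        linarith
      · show t < a + ((m : ℝ) + 2) * h
        have : (m : ℝ) + 2 = (n : ℝ) := by rw [hm, hcastn]; ring
        rw [this]; linarith [hb ▸ htb]
  constructor
  · ext x
    simp only [mem_iUnion, mem_univ, iff_true, hA, mem_setOf_eq]
    exact key (f x) (hrange x).1 (hrange x).2
  · intro B hdisj hBA hBcov g hg
    have memB : ∀ x, ∃ k, x ∈ B k := by
      intro x
      have : x ∈ ⋃ k, B k := hBcov ▸ mem_univ x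
      simpa using this
    constructor
    · intro x
      obtain ⟨k, hk⟩ := memB x
      have hfx : a + (k:ℕ) * h < f x ∧ f x < a + ((k:ℕ) + 2) * h := by
        have := hBA k hk; rw [hA] at this; exact this
      rcases Classical.em (∃ q : ℚ, (q:ℝ) = (x:ℝ)) with hq | hq
      · rw [(hg k x hk).1 hq, abs_le]
        constructor <;> linarith [hfx.1, hfx.2]
      · rw [(hg k x hk).2 hq, abs_le]
        constructor <;> linarith [hfx.1, hfx.2]
    · intro x
      rw [osc]
      refine le_iInf fun U => le_iInf fun hU => le_iInf fun hxU => ?_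
      obtain ⟨V, hVopen, hVU⟩ := isOpen_induced_iff.1 hU
      have hxV : (x:ℝ) ∈ V := by rw [← hVU] at hxU; exact hxU
      have hxcl : (x:ℝ) ∈ closure (Ioo (0:ℝ) 1) := by
        rw [closure_Ioo one_ne_zero.symm]; exact x.2
      have hW : (V ∩ Ioo (0:ℝ) 1).Nonempty :=
        mem_closure_iff.1 hxcl V hVopen hxV
      have hWopen : IsOpen (V ∩ Ioo (0:ℝ) 1) := hVopen.inter isOpen_Ioo
      obtain ⟨q, hqW⟩ := Rat.denseRange_cast.exists_mem_open hWopen hW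
      obtain ⟨r, hr, hrW⟩ := dense_irrational.exists_mem_open hWopen hW
      set qx : Set.Icc (0:ℝ) 1 := ⟨(q:ℝ), Ioo_subset_Icc_self hqW.2⟩ with hqx
      set rx : Set.Icc (0:ℝ) 1 := ⟨r, Ioo_subset_Icc_self hrW.2⟩ with hrx
      have hqU : qx ∈ U := by rw [← hVU]; exact hqW.1
      have hrU : rx ∈ U := by rw [← hVU]; exact hrW.1
      obtain ⟨j, hj⟩ := memB qx
      obtain ⟨l, hl⟩ := memB rx
      have hgq : g qx = a + (j:ℕ) * h := (hg j qx hj).1 ⟨q, rfl⟩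
      have hgr : g rx = a + ((l:ℕ) + 1/2) * h := (hg l rx hl).2 (fun ⟨q0, hq0⟩ => hr ⟨q0, hq0⟩)
      have habs : h / 2 ≤ |g qx - g rx| := by
        rw [hgq, hgr]
        rcases le_or_gt (j:ℕ) (l:ℕ) with hjl | hjl
        · have hjl' : ((j:ℕ):ℝ) ≤ ((l:ℕ):ℝ) := by exact_mod_cast hjl
          refine le_abs.2 (Or.inr ?_)
          nlinarith
        · have hjl' : ((l:ℕ):ℝ) + 1 ≤ ((j:ℕ):ℝ) := by exact_mod_cast hjl
          refine le_abs.2 (Or.inl ?_)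
          nlinarith
      calc ENNReal.ofReal (h/2) ≤ edist (g qx) (g rx) := by
            rw [edist_dist, Real.dist_eq]
            exact ENNReal.ofReal_le_ofReal habs
        _ ≤ EMetric.diam (g '' U) :=
            EMetric.edist_le_diam_of_mem ⟨qx, hqU, rfl⟩ ⟨rx, hrU, rfl⟩
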